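/- Let H : ℝ^N → ℝ and G : ℝ^N → ℝ be differentiable with H convex and G convex, and suppose H(ρ̃|ρ) ≤ G(ρ̃|ρ) for all ρ, ρ̃ ∈ ℝ^N. Let (ρ_n)_{n≥0} satisfy ∇G(ρ_{n+1}) − ∇G(ρ_n) = −∇H(ρ_n) for all n ≥ 0. Then for every ρ ∈ ℝ^N and every n ≥ 1, the sublinear convergence rate H(ρ_n) ≤ H(ρ) + G(ρ|ρ₀)/n holds. In particular, if ν ∈ ℝ^N is a minimizer of H then H(ρ_n) − H(ν) ≤ G(ν|ρ₀)/n for all n ≥ 1. -/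

import Mathlib

open RealInnerProductSpace

noncomputable def bregman {N : ℕ} (F : EuclideanSpace ℝ (Fin N) → ℝ)
    (φ₂ φ₁ : EuclideanSpace ℝ (Fin N)) : ℝ :=
  F φ₂ - F φ₁ - ⟪gradient F φ₁, φ₂ - φ₁⟫

lemma bregman_nonneg {N : ℕ} {F : EuclideanSpace ℝ (Fin N) → ℝ}
    (hd : Differentiable ℝ F) (hc : ConvexOn ℝ Set.univ F)
    (x y : EuclideanSpace ℝ (Fin N)) : 0 ≤ bregman F y x := by
  set g : ℝ → ℝ := fun t => F (x + t • (y - x)) with hg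
  have hgc : ConvexOn ℝ Set.univ g := by
    have h := hc.comp_affineMap (AffineMap.lineMap x y : ℝ →ᵃ[ℝ] _)
    simp only [Set.preimage_univ] at h
    have hfun : g = F ∘ ⇑(AffineMap.lineMap x y : ℝ →ᵃ[ℝ] _) := by
      funext t
      simp [g, AffineMap.lineMap_apply, vsub_eq_sub, vadd_eq_add, add_comm]
    rw [hfun]; exact h
  have hcurve : ∀ t : ℝ, HasDerivAt (fun t : ℝ => x + t • (y - x)) (y - x) t := by
    intro t
    simpa using ((hasDerivAt_id t).smul_const (y - x)).const_add x
  have hF := (hd x).hasGradientAt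
  rw [hasGradientAt_iff_hasFDerivAt] at hF
  have hF' : HasFDerivAt F ((InnerProductSpace.toDual ℝ _) (gradient F x))
      ((fun t : ℝ => x + t • (y - x)) 0) := by simpa using hF
  have hg0 : HasDerivAt g (⟪gradient F x, y - x⟫) 0 := by
    have := hF'.comp_hasDerivAt 0 (hcurve 0)
    exact this.congr_deriv (by simp [InnerProductSpace.toDual_apply_apply])
  have := hgc.le_slope_of_hasDerivAt (Set.mem_univ 0) (Set.mem_univ 1) one_pos hg0
  rw [slope_def_field] at this
  simp only [g] at this
  simp only [bregman]
  have h1 : x + (1:ℝ) • (y - x) = y := by simp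
  have h0 : x + (0:ℝ) • (y - x) = x := by simp
  rw [h1, h0] at this
  linarith [this]

theorem sublinear_rate {N : ℕ} (H G : EuclideanSpace ℝ (Fin N) → ℝ)
    (hHdiff : Differentiable ℝ H) (hGdiff : Differentiable ℝ G)
    (hHconv : ConvexOn ℝ Set.univ H) (hGconv : ConvexOn ℝ Set.univ G)
    (hdom : ∀ ρ ρ' : EuclideanSpace ℝ (Fin N), bregman H ρ' ρ ≤ bregman G ρ' ρ)
    (ρseq : ℕ → EuclideanSpace ℝ (Fin N))
    (hiter : ∀ n : ℕ,
      gradient G (ρseq (n + 1)) - gradient G (ρseq n) = -gradient H (ρseq n)) :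
    (∀ (ρ : EuclideanSpace ℝ (Fin N)) (n : ℕ), 1 ≤ n →
        H (ρseq n) ≤ H ρ + bregman G ρ (ρseq 0) / n) ∧
    (∀ ν : EuclideanSpace ℝ (Fin N), (∀ ρ, H ν ≤ H ρ) →
      ∀ n : ℕ, 1 ≤ n → H (ρseq n) - H ν ≤ bregman G ν (ρseq 0) / n) := by
  have hb0 : ∀ z : EuclideanSpace ℝ (Fin N), bregman G z z = 0 := by
    intro z; simp [bregman]
  have step : ∀ (ρ : EuclideanSpace ℝ (Fin N)) (n : ℕ),
      H (ρseq (n+1)) ≤ H ρ + bregman G ρ (ρseq n) - bregman G ρ (ρseq (n+1)) := by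
    intro ρ n
    have hgradH : gradient H (ρseq n) = gradient G (ρseq n) - gradient G (ρseq (n+1)) := by
      have h := hiter n
      rw [sub_eq_iff_eq_add] at h
      rw [h]; abel
    have hH0 := bregman_nonneg hHdiff hHconv (ρseq n) ρ
    have hd := hdom (ρseq n) (ρseq (n+1))
    simp only [bregman, hgradH, inner_sub_left, inner_sub_right] at hH0 hd ⊢
    linarith
  have descent : ∀ n, H (ρseq (n+1)) ≤ H (ρseq n) := by
    intro n
    have h := step (ρseq n) n
    have h1 := bregman_nonneg hGdiff hGconv (ρseq (n+1)) (ρseq n)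
    have h0 := hb0 (ρseq n)
    linarith
  have mono : ∀ m n, m ≤ n → H (ρseq n) ≤ H (ρseq m) := by
    intro m n h
    induction h with
    | refl => exact le_rfl
    | step h ih => exact (descent _).trans ih
  have main : ∀ (ρ : EuclideanSpace ℝ (Fin N)) (n : ℕ),
      (n:ℝ) * H (ρseq n) ≤ n * H ρ + bregman G ρ (ρseq 0) - bregman G ρ (ρseq n) := by
    intro ρ n
    induction n with
    | zero => simp
    | succ n ih =>
      have h1 := step ρ n
      have h2 : (n:ℝ) * H (ρseq (n+1)) ≤ n * H (ρseq n) :=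
        mul_le_mul_of_nonneg_left (descent n) (Nat.cast_nonneg n)
      push_cast
      push_cast at ih
      nlinarith [ih, h1, h2]
  have part1 : ∀ (ρ : EuclideanSpace ℝ (Fin N)) (n : ℕ), 1 ≤ n →
      H (ρseq n) ≤ H ρ + bregman G ρ (ρseq 0) / n := by
    intro ρ n hn
    have h := main ρ n
    have hD := bregman_nonneg hGdiff hGconv (ρseq n) ρ
    have hnpos : (0:ℝ) < n := by exact_mod_cast hn
    have key : H (ρseq n) - H ρ ≤ bregman G ρ (ρseq 0) / n := by
      rw [le_div_iff₀ hnpos]; nlinarith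
    linarith
  exact ⟨part1, fun ν hν n hn => by linarith [part1 ν n hn]⟩
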